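/- Let a₁₁, a₂₂, a₁₂, b₁, b₂ be nonnegative real numbers such that a₁₁·a₂₂ − a₁₂² = 0 and (a₁₁, a₂₂, a₁₂) ≠ (0, 0, 0), and let S = {(y₁, y₂, y₃) ∈ ℝ³ : a₁₁·y₁² + a₂₂·y₂² + 2·a₁₂·y₁·y₂ + 2·b₁·y₁ + 2·b₂·y₂ − y₃ = 0}. Then there exist an affine isometry φ of ℝ³ and a real p ≠ 0 such that φ(S) = {(z₁, z₂, z₃) ∈ ℝ³ : z₁² = 2·p·z₂}. -/

import Mathlib

noncomputable def pcLin (s1 s2 c B R : ℝ) (hc : c ≠ 0) (hR : R ≠ 0)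
    (hcs : s1 ^ 2 + s2 ^ 2 = c ^ 2) (hR2 : c ^ 2 + 4 * B ^ 2 = R ^ 2) :
    EuclideanSpace ℝ (Fin 3) ≃ₗ[ℝ] EuclideanSpace ℝ (Fin 3) where
  toFun y := WithLp.toLp 2 ![(s1 * y 0 + s2 * y 1) / c,
               (2 * B * s2 * y 0 - 2 * B * s1 * y 1 + c ^ 2 * y 2) / (c * R),
               (-(s2 * y 0) + s1 * y 1 + 2 * B * y 2) / R]
  invFun z := WithLp.toLp 2 ![(s1 * R * z 0 + 2 * B * s2 * z 1 - c * s2 * z 2) / (c * R),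
                (s2 * R * z 0 - 2 * B * s1 * z 1 + c * s1 * z 2) / (c * R),
                (c * z 1 + 2 * B * z 2) / R]
  map_add' x y := by
    ext i
    fin_cases i <;> simp [PiLp.add_apply] <;> ring
  map_smul' t y := by
    ext i
    fin_cases i <;> simp [PiLp.smul_apply] <;> ring
  left_inv y := by
    ext i
    fin_cases i
    · show (s1 * R * _ + 2 * B * s2 * _ - c * s2 * _) / (c * R) = y 0
      simp only [Matrix.cons_val_zero, Matrix.cons_val_one, Matrix.head_cons,
        Matrix.cons_val_two, Matrix.tail_cons, WithLp.ofLp_toLp]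
      field_simp
      linear_combination R ^ 2 * y 0 * hcs + (s2 ^ 2 * y 0 - s1 * s2 * y 1) * hR2
    · show (s2 * R * _ - 2 * B * s1 * _ + c * s1 * _) / (c * R) = y 1
      simp only [Matrix.cons_val_zero, Matrix.cons_val_one, Matrix.head_cons,
        Matrix.cons_val_two, Matrix.tail_cons, WithLp.ofLp_toLp]
      field_simp
      linear_combination R ^ 2 * y 1 * hcs + (s1 ^ 2 * y 1 - s1 * s2 * y 0) * hR2
    · show (c * _ + 2 * B * _) / R = y 2
      simp only [Matrix.cons_val_zero, Matrix.cons_val_one, Matrix.head_cons,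
        Matrix.cons_val_two, Matrix.tail_cons, WithLp.ofLp_toLp]
      field_simp
      linear_combination y 2 * hR2
  right_inv z := by
    ext i
    fin_cases i
    · show (s1 * _ + s2 * _) / c = z 0
      simp only [Matrix.cons_val_zero, Matrix.cons_val_one, Matrix.head_cons,
        Matrix.cons_val_two, Matrix.tail_cons, WithLp.ofLp_toLp]
      field_simp
      linear_combination R * z 0 * hcs
    · show (2 * B * s2 * _ - 2 * B * s1 * _ + c ^ 2 * _) / (c * R) = z 1
      simp only [Matrix.cons_val_zero, Matrix.cons_val_one, Matrix.head_cons,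
        Matrix.cons_val_two, Matrix.tail_cons, WithLp.ofLp_toLp]
      field_simp
      linear_combination (4 * B ^ 2 * z 1 - 2 * B * c * z 2) * hcs + z 1 * c ^ 2 * hR2
    · show (-(s2 * _) + s1 * _ + 2 * B * _) / R = z 2
      simp only [Matrix.cons_val_zero, Matrix.cons_val_one, Matrix.head_cons,
        Matrix.cons_val_two, Matrix.tail_cons, WithLp.ofLp_toLp]
      field_simp
      linear_combination (c * z 2 - 2 * B * z 1) * hcs + c * z 2 * hR2

noncomputable def pcIso (s1 s2 c B R : ℝ) (hc : c ≠ 0) (hR : R ≠ 0)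
    (hcs : s1 ^ 2 + s2 ^ 2 = c ^ 2) (hR2 : c ^ 2 + 4 * B ^ 2 = R ^ 2) :
    EuclideanSpace ℝ (Fin 3) ≃ₗᵢ[ℝ] EuclideanSpace ℝ (Fin 3) :=
  (pcLin s1 s2 c B R hc hR hcs hR2).isometryOfInner (by
    intro x y
    simp only [pcLin, LinearEquiv.coe_mk, LinearMap.coe_mk, AddHom.coe_mk, PiLp.inner_apply, RCLike.inner_apply, conj_trivial,
      Fin.sum_univ_three, Matrix.cons_val_zero, Matrix.cons_val_one, Matrix.head_cons,
      Matrix.cons_val_two, Matrix.tail_cons, WithLp.ofLp_toLp]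
    field_simp
    linear_combination R ^ 2 * (x 0 * y 0 + x 1 * y 1) * hcs + (s2 ^ 2 * x 0 * y 0 + s1 ^ 2 * x 1 * y 1 - s1 * s2 * x 0 * y 1 - s1 * s2 * x 1 * y 0 + c ^ 2 * x 2 * y 2) * hR2)

/-- Case 3.2.2.B of **Proposition 3.2** (parabolic cylinder): if the quadratic part is nonzero
with vanishing determinant `a₁₁·a₂₂ − a₁₂² = 0`, then the surface
`a₁₁y₁² + a₂₂y₂² + 2a₁₂y₁y₂ + 2b₁y₁ + 2b₂y₂ − y₃ = 0` is carried by an affine isometry of ℝ³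
onto the canonical parabolic cylinder `z₁² = 2·p·z₂` with `p ≠ 0`. -/
theorem stmt_5 (a₁₁ a₂₂ a₁₂ b₁ b₂ : ℝ)
    (h₁₁ : 0 ≤ a₁₁) (h₂₂ : 0 ≤ a₂₂) (h₁₂ : 0 ≤ a₁₂) (hb₁ : 0 ≤ b₁) (hb₂ : 0 ≤ b₂)
    (hdet : a₁₁ * a₂₂ - a₁₂ ^ 2 = 0)
    (hnz : ¬(a₁₁ = 0 ∧ a₂₂ = 0 ∧ a₁₂ = 0))
    (S : Set (EuclideanSpace ℝ (Fin 3)))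
    (hS : S = {y : EuclideanSpace ℝ (Fin 3) |
      a₁₁ * (y 0) ^ 2 + a₂₂ * (y 1) ^ 2 + 2 * a₁₂ * (y 0) * (y 1)
        + 2 * b₁ * (y 0) + 2 * b₂ * (y 1) - y 2 = 0}) :
    ∃ (φ : EuclideanSpace ℝ (Fin 3) ≃ᵃⁱ[ℝ] EuclideanSpace ℝ (Fin 3)) (p : ℝ),
      p ≠ 0 ∧ φ '' S = {z : EuclideanSpace ℝ (Fin 3) | (z 0) ^ 2 = 2 * p * z 1} := by
  -- basic algebraic setup
  set s1 := Real.sqrt a₁₁ with hs1def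
  set s2 := Real.sqrt a₂₂ with hs2def
  have hs1 : s1 ^ 2 = a₁₁ := Real.sq_sqrt h₁₁
  have hs2 : s2 ^ 2 = a₂₂ := Real.sq_sqrt h₂₂
  have h12 : s1 * s2 = a₁₂ := by
    have : a₁₂ = Real.sqrt (a₁₂ ^ 2) := (Real.sqrt_sq h₁₂).symm
    rw [this, show a₁₂ ^ 2 = a₁₁ * a₂₂ by linarith, Real.sqrt_mul h₁₁]
  have hsum : 0 < a₁₁ + a₂₂ := by
    rcases lt_or_eq_of_le (by positivity : (0:ℝ) ≤ a₁₁ + a₂₂) with h | h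
    · exact h
    · exfalso
      have ha1 : a₁₁ = 0 := by linarith
      have ha2 : a₂₂ = 0 := by linarith
      have ha3 : a₁₂ = 0 := by nlinarith
      exact hnz ⟨ha1, ha2, ha3⟩
  set c := Real.sqrt (a₁₁ + a₂₂) with hcdef
  have hcs : s1 ^ 2 + s2 ^ 2 = c ^ 2 := by
    rw [hs1, hs2, Real.sq_sqrt hsum.le]
  have hcpos : 0 < c := Real.sqrt_pos.mpr hsum
  have hc : c ≠ 0 := hcpos.ne'
  set B := b₂ * s1 - b₁ * s2 with hBdef
  set A := b₁ * s1 + b₂ * s2 with hAdef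
  have hRpos : 0 < c ^ 2 + 4 * B ^ 2 := by positivity
  set R := Real.sqrt (c ^ 2 + 4 * B ^ 2) with hRdef
  have hR2 : c ^ 2 + 4 * B ^ 2 = R ^ 2 := (Real.sq_sqrt hRpos.le).symm
  have hRpos' : 0 < R := Real.sqrt_pos.mpr hRpos
  have hR : R ≠ 0 := hRpos'.ne'
  set v : EuclideanSpace ℝ (Fin 3) := WithLp.toLp 2 ![A / c ^ 3, A ^ 2 / (c ^ 3 * R), 0] with hvdef
  set φ : EuclideanSpace ℝ (Fin 3) ≃ᵃⁱ[ℝ] EuclideanSpace ℝ (Fin 3) :=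
    (pcIso s1 s2 c B R hc hR hcs hR2).toAffineIsometryEquiv.trans
      (AffineIsometryEquiv.constVAdd ℝ _ v) with hφdef
  refine ⟨φ, R / (2 * c ^ 3), by positivity, ?_⟩
  have hφ0 : ∀ y : EuclideanSpace ℝ (Fin 3),
      φ y 0 = A / c ^ 3 + (s1 * y 0 + s2 * y 1) / c := by
    intro y
    simp [hφdef, hvdef, pcIso, pcLin, AffineIsometryEquiv.trans, AffineIsometryEquiv.constVAdd,
      PiLp.add_apply]
  have hφ1 : ∀ y : EuclideanSpace ℝ (Fin 3),
      φ y 1 = A ^ 2 / (c ^ 3 * R)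
        + (2 * B * s2 * y 0 - 2 * B * s1 * y 1 + c ^ 2 * y 2) / (c * R) := by
    intro y
    simp [hφdef, hvdef, pcIso, pcLin, AffineIsometryEquiv.trans, AffineIsometryEquiv.constVAdd,
      PiLp.add_apply]
  have hdiff : ∀ y : EuclideanSpace ℝ (Fin 3),
      (A / c ^ 3 + (s1 * y 0 + s2 * y 1) / c) ^ 2
        - 2 * (R / (2 * c ^ 3)) * (A ^ 2 / (c ^ 3 * R)
            + (2 * B * s2 * y 0 - 2 * B * s1 * y 1 + c ^ 2 * y 2) / (c * R))
      = (s1 ^ 2 * y 0 ^ 2 + s2 ^ 2 * y 1 ^ 2 + 2 * (s1 * s2) * y 0 * y 1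
          + 2 * b₁ * y 0 + 2 * b₂ * y 1 - y 2) / c ^ 2 := by
    intro y
    field_simp
    linear_combination 2 * c ^ 2 * (b₁ * y 0 + b₂ * y 1) * hcs
  have key : ∀ y : EuclideanSpace ℝ (Fin 3),
      ((A / c ^ 3 + (s1 * y 0 + s2 * y 1) / c) ^ 2
        = 2 * (R / (2 * c ^ 3)) * (A ^ 2 / (c ^ 3 * R)
            + (2 * B * s2 * y 0 - 2 * B * s1 * y 1 + c ^ 2 * y 2) / (c * R)))
      ↔ (s1 ^ 2 * y 0 ^ 2 + s2 ^ 2 * y 1 ^ 2 + 2 * (s1 * s2) * y 0 * y 1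
          + 2 * b₁ * y 0 + 2 * b₂ * y 1 - y 2 = 0) := by
    intro y
    rw [← sub_eq_zero, hdiff y, div_eq_zero_iff]
    simp [pow_eq_zero_iff, hc]
  have hpre : S = φ ⁻¹' {z : EuclideanSpace ℝ (Fin 3) | (z 0) ^ 2 = 2 * (R / (2 * c ^ 3)) * z 1} := by
    rw [hS]
    ext y
    simp only [Set.mem_setOf_eq, Set.mem_preimage, hφ0 y, hφ1 y]
    rw [← hs1, ← hs2, ← h12]
    exact (key y).symm
  rw [hpre, Set.image_preimage_eq _ φ.surjective]
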